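/- arXiv:2605.21013 — 2 statements merged into one kernel-verified Lean document; each statement's English description precedes it below -/
import Mathlib

section
/- Let m ≥ 1, k = ℓ + m − 1, and A₀, A₁, …, A_m ∈ ℂ^{k×ℓ}. Let (λ*, x*) ∈ ℂ^m × ℂ^ℓ be an eigenpair, i.e., x* ≠ 0 and W(λ*) x* = 0. Suppose λ* is an algebraically simple eigenvalue, in the sense that χ_σ(λ*) = 0 for every subset σ ⊆ {1, …, k} of size ℓ, and the L × m Jacobian matrix whose entries are the partial derivatives ∂χ_σ/∂λ_j evaluated at λ*, with one row per size-ℓ subset σ (L = C(k, ℓ)) and columns j = 1, …, m, has rank m. Then for every choice of m linearly independent vectors y₁, …, y_m ∈ ℂ^k satisfying y_i^H W(λ*) = 0 for i = 1, …, m, the m × m matrix B with entries B_{ij} = y_i^H A_j x* (i, j = 1, …, m) is nonsingular. -/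
open scoped ComplexOrder
open Matrix

noncomputable def enorm2 {n : ℕ} (x : Fin n → ℂ) : ℝ :=
  ‖(WithLp.equiv 2 (Fin n → ℂ)).symm x‖

noncomputable def opNorm2 {k l : ℕ} (M : Matrix (Fin k) (Fin l) ℂ) : ℝ :=
  ‖LinearMap.toContinuousLinearMap (Matrix.toEuclideanLin M)‖

noncomputable def sigmaMin {k l : ℕ} (M : Matrix (Fin k) (Fin l) ℂ) : ℝ :=
  sInf {r : ℝ | ∃ x : Fin l → ℂ, enorm2 x = 1 ∧ r = enorm2 (M.mulVec x)}

noncomputable def pencil {m k l : ℕ} (A : Fin (m + 1) → Matrix (Fin k) (Fin l) ℂ)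
    (lam : Fin m → ℂ) : Matrix (Fin k) (Fin l) ℂ :=
  A 0 + ∑ i : Fin m, lam i • A i.succ

noncomputable def gammaVal {m k l : ℕ} (E : Fin (m + 1) → Matrix (Fin k) (Fin l) ℂ)
    (lam : Fin m → ℂ) : ℝ :=
  opNorm2 (E 0) + ∑ i : Fin m, ‖lam i‖ * opNorm2 (E i.succ)

open MvPolynomial in
/-- The pencil `W(λ)` with the spectral parameters as polynomial variables. -/
noncomputable def pencilPoly {m k l : ℕ} (A : Fin (m + 1) → Matrix (Fin k) (Fin l) ℂ) :
    Matrix (Fin k) (Fin l) (MvPolynomial (Fin m) ℂ) :=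
  Matrix.of fun i j => C (A 0 i j) + ∑ t : Fin m, X t * C (A t.succ i j)

/-- The secular polynomial `χ_σ`: the determinant of the `ℓ × ℓ` submatrix of the
polynomial pencil formed by the rows indexed by a size-`ℓ` subset `σ`. -/
noncomputable def secular {m k l : ℕ} (A : Fin (m + 1) → Matrix (Fin k) (Fin l) ℂ)
    (σ : Finset (Fin k)) (h : σ.card = l) : MvPolynomial (Fin m) ℂ :=
  ((pencilPoly A).submatrix (fun i => ((σ.orderIsoOfFin h i : Fin k))) id).det

section AuxProofs
open Polynomial


section DetDeriv
variable {R : Type*} [CommRing R]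

lemma fn_map_prod {ι : Type*} [DecidableEq ι] (D : R →+ R)
    (hmul : ∀ a b, D (a * b) = a * D b + D a * b) (s : Finset ι) (f : ι → R) :
    D (∏ i ∈ s, f i) = ∑ i ∈ s, (∏ j ∈ s.erase i, f j) * D (f i) := by
  induction s using Finset.induction_on with
  | empty =>
    have h1 : D 1 = 0 := by have := hmul 1 1; simpa using this.symm
    simpa using h1
  | @insert a s ha ih =>
    rw [Finset.prod_insert ha, hmul, ih, Finset.sum_insert ha, Finset.erase_insert ha,
      Finset.mul_sum, add_comm]
    congr 1
    · ring
    · refine Finset.sum_congr rfl fun i hi => ?_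
      rw [Finset.erase_insert_of_ne (show a ≠ i by rintro rfl; exact ha hi),
        Finset.prod_insert (fun hmem => ha (Finset.mem_of_mem_erase hmem))]
      ring

lemma addHom_map_det {n : ℕ} (D : R →+ R)
    (hmul : ∀ a b, D (a * b) = a * D b + D a * b)
    (M : Matrix (Fin n) (Fin n) R) :
    D M.det = ∑ r, (M.updateRow r (fun j => D (M r j))).det := by
  simp only [Matrix.det_apply, map_sum]
  rw [Finset.sum_comm]
  refine Finset.sum_congr rfl fun σ _ => ?_
  simp only [Units.smul_def, AddMonoidHom.map_zsmul]
  rw [← Finset.smul_sum]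
  congr 1
  rw [fn_map_prod D hmul]
  rw [← Equiv.sum_comp σ (fun r => ∏ i, (M.updateRow r fun j => D (M r j)) (σ i) i)]
  refine Finset.sum_congr rfl fun c _ => ?_
  rw [← Finset.mul_prod_erase Finset.univ _ (Finset.mem_univ c)]
  have h1 : (M.updateRow (σ c) fun j => D (M (σ c) j)) (σ c) c = D (M (σ c) c) := by
    rw [Matrix.updateRow_self]
  have h2 : ∀ i ∈ Finset.univ.erase c,
      (M.updateRow (σ c) fun j => D (M (σ c) j)) (σ i) i = M (σ i) i := by
    intro i hi
    rw [Matrix.updateRow_ne (σ.injective.ne (Finset.ne_of_mem_erase hi))]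
  rw [h1, Finset.prod_congr rfl h2]
  ring

end DetDeriv

lemma det_updateRow_finset_sum {n : ℕ} {R : Type*} [CommRing R] (M : Matrix (Fin n) (Fin n) R)
    (r : Fin n) {ι : Type*} (s : Finset ι) (w : ι → Fin n → R) :
    (M.updateRow r (∑ j ∈ s, w j)).det = ∑ j ∈ s, (M.updateRow r (w j)).det := by
  classical
  induction s using Finset.induction_on with
  | empty =>
    simp only [Finset.sum_empty]
    exact Matrix.det_eq_zero_of_row_eq_zero r (fun j => by rw [Matrix.updateRow_self]; rfl)
  | @insert a s ha ih =>
    rw [Finset.sum_insert ha, Matrix.det_updateRow_add, ih, Finset.sum_insert ha]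

lemma coeff_one_mul' {R : Type*} [CommRing R] (f g : R[X]) :
    (f * g).coeff 1 = f.coeff 0 * g.coeff 1 + f.coeff 1 * g.coeff 0 := by
  rw [Polynomial.coeff_mul]
  rw [show Finset.HasAntidiagonal.antidiagonal 1 = {(0,1),(1,0)} by decide]
  simp

lemma sum_det_updateRow_eq_zero {n : ℕ} (M N : Matrix (Fin n) (Fin n) ℂ)
    (x v : Fin n → ℂ) (i0 : Fin n) (hx0 : x i0 ≠ 0)
    (hMx : M.mulVec x = 0) (hNx : N.mulVec x = M.mulVec v) :
    ∑ r, (M.updateRow r (N r)).det = 0 := by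
  classical
  set P : Matrix (Fin n) (Fin n) ℂ[X] :=
    M.map Polynomial.C + (Polynomial.X : ℂ[X]) • N.map Polynomial.C with hP
  have hPent : ∀ r j, P r j = Polynomial.C (M r j) + Polynomial.X * Polynomial.C (N r j) := by
    intro r j; simp [hP, Matrix.add_apply, Matrix.smul_apply, smul_eq_mul]
  let D : ℂ[X] →+ ℂ[X] := (Polynomial.derivative (R := ℂ)).toAddMonoidHom
  have hmul : ∀ a b : ℂ[X], D (a * b) = a * D b + D a * b := by
    intro a b
    show Polynomial.derivative (a * b) = a * Polynomial.derivative b + Polynomial.derivative a * b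
    rw [Polynomial.derivative_mul]; ring
  have h1 := addHom_map_det D hmul P
  have hDent : ∀ r j, D (P r j) = Polynomial.C (N r j) := by
    intro r j
    show Polynomial.derivative (P r j) = _
    rw [hPent]; simp
  -- evaluate at 0
  have h2 : Polynomial.eval 0 (Polynomial.derivative P.det) = ∑ r, (M.updateRow r (N r)).det := by
    have : Polynomial.derivative P.det = D P.det := rfl
    rw [this, h1]
    rw [show (Polynomial.eval 0 : ℂ[X] → ℂ) = (Polynomial.evalRingHom 0 : ℂ[X] →+* ℂ) from rfl]
    rw [map_sum]
    refine Finset.sum_congr rfl fun r _ => ?_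
    rw [RingHom.map_det]
    congr 1
    ext i j
    by_cases h : i = r
    · subst h
      simp only [RingHom.mapMatrix_apply, Matrix.map_apply, Matrix.updateRow_self, hDent]
      simp
    · simp only [RingHom.mapMatrix_apply, Matrix.map_apply, Matrix.updateRow_ne h, hPent]
      simp
  -- coefficients of det P
  set q : Fin n → ℂ[X] := P.mulVec (fun t => Polynomial.C (x t) - Polynomial.X * Polynomial.C (v t)) with hq
  have hq0 : ∀ j, (q j).coeff 0 = 0 := by
    intro j
    have : q j = ∑ t, P j t * (Polynomial.C (x t) - Polynomial.X * Polynomial.C (v t)) := rfl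
    rw [this, Polynomial.finset_sum_coeff]
    have : ∀ t, (P j t * (Polynomial.C (x t) - Polynomial.X * Polynomial.C (v t))).coeff 0
        = M j t * x t := by
      intro t; rw [hPent]; simp [Polynomial.mul_coeff_zero]
    rw [Finset.sum_congr rfl fun t _ => this t]
    have := congrFun hMx j
    simpa [Matrix.mulVec, dotProduct] using this
  have hq1 : ∀ j, (q j).coeff 1 = 0 := by
    intro j
    have : q j = ∑ t, P j t * (Polynomial.C (x t) - Polynomial.X * Polynomial.C (v t)) := rfl
    rw [this, Polynomial.finset_sum_coeff]
    have hco : ∀ t, (P j t * (Polynomial.C (x t) - Polynomial.X * Polynomial.C (v t))).coeff 1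
        = N j t * x t - M j t * v t := by
      intro t; rw [hPent, coeff_one_mul']; simp; ring
    rw [Finset.sum_congr rfl fun t _ => hco t]
    have h3 := congrFun hNx j
    simp only [Matrix.mulVec, dotProduct] at h3
    rw [Finset.sum_sub_distrib, h3, sub_self]
  -- det P • w = adjugate * q
  have hdet : ∀ j, P.det * (Polynomial.C (x j) - Polynomial.X * Polynomial.C (v j))
      = ∑ t, P.adjugate j t * q t := by
    intro j
    have e1 : (P.adjugate * P).mulVec (fun t => Polynomial.C (x t) - Polynomial.X * Polynomial.C (v t))
        = P.adjugate.mulVec q := by rw [← Matrix.mulVec_mulVec]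
    rw [Matrix.adjugate_mul] at e1
    have e2 := congrFun e1 j
    simp only [Matrix.smul_mulVec, Matrix.one_mulVec, Pi.smul_apply, smul_eq_mul] at e2
    rw [e2]; rfl
  have hc0 : P.det.coeff 0 = 0 := by
    have h3 := congrArg (fun p => Polynomial.coeff p 0) (hdet i0)
    simp only [Polynomial.finset_sum_coeff, Polynomial.mul_coeff_zero] at h3
    simp only [hq0, mul_zero, Finset.sum_const_zero] at h3
    have h4 : (Polynomial.C (x i0) - Polynomial.X * Polynomial.C (v i0)).coeff 0 = x i0 := by simp
    rw [h4] at h3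
    exact (mul_eq_zero.mp h3).resolve_right hx0
  have hc1 : P.det.coeff 1 = 0 := by
    have h3 := congrArg (fun p => Polynomial.coeff p 1) (hdet i0)
    simp only [Polynomial.finset_sum_coeff, coeff_one_mul'] at h3
    simp only [hq0, hq1, mul_zero, add_zero, Finset.sum_const_zero] at h3
    have h4 : (Polynomial.C (x i0) - Polynomial.X * Polynomial.C (v i0)).coeff 0 = x i0 := by simp
    rw [h4, hc0, zero_mul, zero_add] at h3
    exact (mul_eq_zero.mp h3).resolve_right hx0
  rw [← h2]
  rw [show Polynomial.eval 0 (Polynomial.derivative P.det)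
      = (Polynomial.derivative P.det).coeff 0 from (Polynomial.coeff_zero_eq_eval_zero _).symm]
  rw [Polynomial.coeff_derivative, hc1, zero_mul]

lemma eval_pencilPoly_entry {m k l : ℕ} (A : Fin (m + 1) → Matrix (Fin k) (Fin l) ℂ)
    (lam : Fin m → ℂ) (i : Fin k) (t : Fin l) :
    MvPolynomial.eval lam (pencilPoly A i t) = pencil A lam i t := by
  simp [pencilPoly, pencil, Matrix.sum_apply]

lemma eval_secular {m k l : ℕ} (A : Fin (m + 1) → Matrix (Fin k) (Fin l) ℂ)
    (lam : Fin m → ℂ) (σ : Finset (Fin k)) (h : σ.card = l) :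
    MvPolynomial.eval lam (secular A σ h) =
      ((pencil A lam).submatrix (fun i => ((σ.orderIsoOfFin h i : Fin k))) id).det := by
  rw [secular, RingHom.map_det]
  congr 1
  ext i t
  simp [eval_pencilPoly_entry]

lemma eval_pderiv_secular {m k l : ℕ} (A : Fin (m + 1) → Matrix (Fin k) (Fin l) ℂ)
    (lam : Fin m → ℂ) (σ : Finset (Fin k)) (h : σ.card = l) (j : Fin m) :
    MvPolynomial.eval lam (MvPolynomial.pderiv j (secular A σ h)) =
      ∑ r, (((pencil A lam).submatrix (fun i => ((σ.orderIsoOfFin h i : Fin k))) id).updateRow r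
        (fun t => (A j.succ) ((σ.orderIsoOfFin h r : Fin k)) t)).det := by
  classical
  set rr : Fin l → Fin k := fun i => ((σ.orderIsoOfFin h i : Fin k)) with hrr
  set N := (pencilPoly A).submatrix rr id with hN
  let D : MvPolynomial (Fin m) ℂ →+ MvPolynomial (Fin m) ℂ :=
    ((MvPolynomial.pderiv j).toLinearMap).toAddMonoidHom
  have hmul : ∀ a b, D (a * b) = a * D b + D a * b := by
    intro a b
    show MvPolynomial.pderiv j (a * b)
      = a * MvPolynomial.pderiv j b + MvPolynomial.pderiv j a * b
    rw [MvPolynomial.pderiv_mul]; ring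
  have hDent : ∀ r t, MvPolynomial.pderiv j (N r t) = MvPolynomial.C (A j.succ (rr r) t) := by
    intro r t
    show MvPolynomial.pderiv j (pencilPoly A (rr r) t) = _
    simp [pencilPoly, MvPolynomial.pderiv_mul, Pi.single_apply, Finset.sum_ite_eq']
  have h1 : MvPolynomial.pderiv j (secular A σ h)
      = ∑ r, (N.updateRow r (fun t => MvPolynomial.pderiv j (N r t))).det := by
    have := addHom_map_det D hmul N
    exact this
  rw [h1, map_sum]
  refine Finset.sum_congr rfl fun r _ => ?_
  rw [RingHom.map_det]
  congr 1
  ext i t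
  by_cases hi : i = r
  · subst hi
    simp only [RingHom.mapMatrix_apply, Matrix.map_apply, Matrix.updateRow_self, hDent]
    simp [hrr, Finset.coe_orderIsoOfFin_apply]
  · simp only [RingHom.mapMatrix_apply, Matrix.map_apply, Matrix.updateRow_ne hi,
      Matrix.updateRow_ne hi, hN, Matrix.submatrix_apply, id_eq, eval_pencilPoly_entry]

/-- bundled dot-product-with-`w` functional -/
noncomputable def dpl {n : ℕ} (w : Fin n → ℂ) : (Fin n → ℂ) →ₗ[ℂ] ℂ where
  toFun z := w ⬝ᵥ z
  map_add' a b := dotProduct_add w a b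
  map_smul' a b := by simp [dotProduct_smul]

end AuxProofs

/-- at an algebraically simple eigenvalue the auxiliary matrix `B` is
nonsingular for any basis of the left null space. -/
theorem auxiliary_matrix_nonsingular {m k l : ℕ} (hm : 1 ≤ m) (hk : k = l + m - 1)
    (A : Fin (m + 1) → Matrix (Fin k) (Fin l) ℂ)
    (lam : Fin m → ℂ) (x : Fin l → ℂ) (hx : x ≠ 0)
    (heig : (pencil A lam).mulVec x = 0)
    (hsec : ∀ (σ : Finset (Fin k)) (h : σ.card = l),
      MvPolynomial.eval lam (secular A σ h) = 0)
    (hrank : Matrix.rank (Matrix.of fun (σ : {s : Finset (Fin k) // s.card = l}) (j : Fin m) =>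
        MvPolynomial.eval lam (MvPolynomial.pderiv j (secular A σ.1 σ.2))) = m) :
    ∀ y : Fin m → (Fin k → ℂ), LinearIndependent ℂ y →
      (∀ i, Matrix.vecMul (star (y i)) (pencil A lam) = 0) →
      (Matrix.of fun i j : Fin m => star (y i) ⬝ᵥ (A j.succ).mulVec x).det ≠ 0 := by
  intro y hy hynull hdet
  classical
  rcases Nat.eq_zero_or_pos l with hl0 | hl
  · subst hl0; exact hx (funext fun t => t.elim0)
  obtain ⟨i0, hx0⟩ : ∃ i0, x i0 ≠ 0 := Function.ne_iff.mp hx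
  set W := pencil A lam with hW
  obtain ⟨c, hc0, hc⟩ := Matrix.exists_mulVec_eq_zero_iff.mpr hdet
  set Cm : Matrix (Fin k) (Fin l) ℂ := ∑ j : Fin m, c j • A j.succ with hCm
  have hCmul : Cm.mulVec x = ∑ j : Fin m, c j • (A j.succ).mulVec x := by
    funext r
    simp only [hCm, Matrix.mulVec, dotProduct, Matrix.sum_apply, Pi.smul_apply,
      smul_eq_mul, Finset.sum_apply, Finset.sum_mul, Finset.mul_sum]
    rw [Finset.sum_comm]
    exact Finset.sum_congr rfl fun j _ => Finset.sum_congr rfl fun t _ => by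
      simp only [Matrix.smul_apply, smul_eq_mul]; ring
  have hyC : ∀ i, star (y i) ⬝ᵥ Cm.mulVec x = 0 := by
    intro i
    have h1 := congrFun hc i
    simp only [Matrix.mulVec, dotProduct, Matrix.of_apply, Pi.zero_apply] at h1
    rw [hCmul]
    calc star (y i) ⬝ᵥ ∑ j : Fin m, c j • (A j.succ).mulVec x
        = ∑ j : Fin m, (star (y i) ⬝ᵥ (A j.succ).mulVec x) * c j := by
          simp only [dotProduct, Matrix.mulVec, Finset.sum_apply, Pi.smul_apply,
            smul_eq_mul, Finset.mul_sum, Finset.sum_mul]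
          rw [Finset.sum_comm]
          exact Finset.sum_congr rfl fun j _ => Finset.sum_congr rfl fun t _ =>
            Finset.sum_congr rfl fun s _ => by ring
      _ = 0 := h1
  -- the kernel of W has dimension ≤ 1
  set Wk := LinearMap.ker W.mulVecLin with hWk
  have hker : Module.finrank ℂ Wk ≤ 1 := by
    by_contra hk2
    push_neg at hk2
    have hJ0 : (Matrix.of fun (σ : {s : Finset (Fin k) // s.card = l}) (j : Fin m) =>
        MvPolynomial.eval lam (MvPolynomial.pderiv j (secular A σ.1 σ.2))) = 0 := by
      ext σ j
      simp only [Matrix.of_apply, Matrix.zero_apply]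
      rw [eval_pderiv_secular]
      refine Finset.sum_eq_zero fun r _ => ?_
      have hφ := LinearMap.finrank_range_add_finrank_ker
        ((dpl (fun t => A j.succ ((σ.1.orderIsoOfFin σ.2 r : Fin k)) t)).comp Wk.subtype)
      have hφ2 : Module.finrank ℂ (LinearMap.range
          ((dpl (fun t => A j.succ ((σ.1.orderIsoOfFin σ.2 r : Fin k)) t)).comp Wk.subtype)) ≤ 1 := by
        simpa using (Submodule.finrank_le (LinearMap.range
          ((dpl (fun t => A j.succ ((σ.1.orderIsoOfFin σ.2 r : Fin k)) t)).comp Wk.subtype)))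
      have hφ3 : 0 < Module.finrank ℂ (LinearMap.ker
          ((dpl (fun t => A j.succ ((σ.1.orderIsoOfFin σ.2 r : Fin k)) t)).comp Wk.subtype)) := by
        omega
      have : Nontrivial (LinearMap.ker
          ((dpl (fun t => A j.succ ((σ.1.orderIsoOfFin σ.2 r : Fin k)) t)).comp Wk.subtype)) :=
        Module.finrank_pos_iff.mp hφ3
      obtain ⟨z', hz'⟩ := exists_ne (0 : LinearMap.ker
        ((dpl (fun t => A j.succ ((σ.1.orderIsoOfFin σ.2 r : Fin k)) t)).comp Wk.subtype))
      set z : Fin l → ℂ := ((z' : Wk) : Fin l → ℂ) with hz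
      have hzne : z ≠ 0 := by
        intro h0
        exact hz' (Subtype.ext (Subtype.ext h0))
      have hzker : W.mulVec z = 0 := by
        have h7 := (z' : Wk).2
        rwa [LinearMap.mem_ker, Matrix.mulVecLin_apply] at h7
      have hzφ : (fun t => A j.succ ((σ.1.orderIsoOfFin σ.2 r : Fin k)) t) ⬝ᵥ z = 0 := by
        have h7 := z'.2
        rw [LinearMap.mem_ker] at h7
        exact h7
      apply Matrix.exists_mulVec_eq_zero_iff.mp
      refine ⟨z, hzne, ?_⟩
      funext r'
      show (((W.submatrix (fun i => ((σ.1.orderIsoOfFin σ.2 i : Fin k))) id).updateRow r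
        (fun t => A j.succ ((σ.1.orderIsoOfFin σ.2 r : Fin k)) t)) r') ⬝ᵥ z = 0
      by_cases hr : r' = r
      · subst hr
        rw [Matrix.updateRow_self]
        exact hzφ
      · rw [Matrix.updateRow_ne hr]
        have h8 := congrFun hzker ((σ.1.orderIsoOfFin σ.2 r' : Fin k))
        simpa [Matrix.mulVec, dotProduct, Matrix.submatrix_apply] using h8
    rw [hJ0, Matrix.rank_zero] at hrank
    omega
  -- dimension of the left null space
  set Nsp := LinearMap.ker (Wᵀ).mulVecLin with hNsp
  have hrk1 : W.rank + Module.finrank ℂ Wk = l := by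
    have h1 := LinearMap.finrank_range_add_finrank_ker W.mulVecLin
    rw [Module.finrank_fin_fun] at h1
    exact h1
  have hrk2 : Wᵀ.rank + Module.finrank ℂ Nsp = k := by
    have h1 := LinearMap.finrank_range_add_finrank_ker (Wᵀ).mulVecLin
    rw [Module.finrank_fin_fun] at h1
    exact h1
  have hrkT : Wᵀ.rank = W.rank := Matrix.rank_transpose W
  have hNle : Module.finrank ℂ Nsp ≤ m := by omega
  -- the starred y's span Nsp
  set sy : Fin m → (Fin k → ℂ) := fun i => star (y i) with hsy
  have hsymem : ∀ i, sy i ∈ Nsp := by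
    intro i
    show Wᵀ.mulVecLin (sy i) = 0
    rw [Matrix.mulVecLin_apply, Matrix.mulVec_transpose]
    exact hynull i
  have hsyind : LinearIndependent ℂ sy := by
    rw [linearIndependent_iff'] at hy ⊢
    intro s g hg i hi
    have h2 : ∑ i ∈ s, star (g i) • y i = 0 := by
      have h3 := congrArg (fun z : Fin k → ℂ => star z) hg
      simpa [hsy, star_sum, star_smul] using h3
    have h4 := hy s (fun i => star (g i)) h2 i hi
    have h5 := congrArg star h4
    simpa using h5
  have hspan : Submodule.span ℂ (Set.range sy) = Nsp := by
    apply Submodule.eq_of_le_of_finrank_le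
    · rw [Submodule.span_le]; rintro _ ⟨i, rfl⟩; exact hsymem i
    · rw [finrank_span_eq_card hsyind]
      simpa using hNle
  -- Cm x lies in the range of W
  have hCrange : Cm.mulVec x ∈ LinearMap.range W.mulVecLin := by
    by_contra hnot
    obtain ⟨f, hf0, hfbot⟩ :=
      Submodule.exists_dual_map_eq_bot_of_notMem hnot inferInstance
    set u : Fin k → ℂ := fun t => f (Pi.single t 1) with hu
    have hfu : ∀ z, f z = u ⬝ᵥ z := by
      intro z
      conv_lhs => rw [pi_eq_sum_univ z]
      rw [map_sum]
      simp only [_root_.map_smul, smul_eq_mul]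
      have hsingle : ∀ t : Fin k, (fun j => if t = j then (1:ℂ) else 0) = Pi.single t 1 := by
        intro t; funext j; simp [Pi.single_apply, eq_comm]
      simp only [dotProduct, hsingle, hu]
      exact Finset.sum_congr rfl fun t _ => by ring
    have hrange0 : ∀ w ∈ LinearMap.range W.mulVecLin, f w = 0 := by
      intro w hw
      have h1 : f w ∈ Submodule.map f (LinearMap.range W.mulVecLin) :=
        Submodule.mem_map_of_mem hw
      rw [hfbot] at h1
      simpa using h1
    have huN : u ∈ Nsp := by
      show Wᵀ.mulVecLin u = 0
      rw [Matrix.mulVecLin_apply, Matrix.mulVec_transpose]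
      funext s
      have h1 : f (W.mulVec (Pi.single s 1)) = 0 :=
        hrange0 _ ⟨Pi.single s 1, rfl⟩
      rw [hfu] at h1
      simpa [Matrix.vecMul, Matrix.mulVec, dotProduct, Pi.single_apply, mul_ite,
        Finset.sum_ite_eq'] using h1
    have hu0 : u ⬝ᵥ Cm.mulVec x = 0 := by
      have h4 : Nsp ≤ LinearMap.ker (dpl (Cm.mulVec x)) := by
        rw [← hspan, Submodule.span_le]
        rintro _ ⟨i, rfl⟩
        show Cm.mulVec x ⬝ᵥ sy i = 0
        rw [dotProduct_comm]
        exact hyC i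
      have h5 : Cm.mulVec x ⬝ᵥ u = 0 := h4 huN
      rw [dotProduct_comm] at h5
      exact h5
    rw [hfu] at hf0
    exact hf0 hu0
  obtain ⟨v, hv⟩ := hCrange
  rw [Matrix.mulVecLin_apply] at hv
  -- the Jacobian kills c
  have hJc : ∀ (σ : {s : Finset (Fin k) // s.card = l}),
      ∑ j, MvPolynomial.eval lam (MvPolynomial.pderiv j (secular A σ.1 σ.2)) * c j = 0 := by
    intro σ
    calc ∑ j, MvPolynomial.eval lam (MvPolynomial.pderiv j (secular A σ.1 σ.2)) * c j
        = ∑ r, ∑ j : Fin m, c j * (((W).submatrix (fun i => ((σ.1.orderIsoOfFin σ.2 i : Fin k))) id).updateRow r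
            (fun t => (A j.succ) ((σ.1.orderIsoOfFin σ.2 r : Fin k)) t)).det := by
          simp only [eval_pderiv_secular, Finset.sum_mul]
          rw [Finset.sum_comm]
          exact Finset.sum_congr rfl fun r _ => Finset.sum_congr rfl fun j _ => by ring
      _ = ∑ r, (((W).submatrix (fun i => ((σ.1.orderIsoOfFin σ.2 i : Fin k))) id).updateRow r
            (fun t => (Cm.submatrix (fun i => ((σ.1.orderIsoOfFin σ.2 i : Fin k))) id) r t)).det := by
          refine Finset.sum_congr rfl fun r _ => ?_
          have h2 : (fun t => (Cm.submatrix (fun i => ((σ.1.orderIsoOfFin σ.2 i : Fin k))) id) r t)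
              = ∑ j : Fin m, (fun t => c j • ((fun t' => A j.succ ((σ.1.orderIsoOfFin σ.2 r : Fin k)) t') t)) := by
            funext t
            simp [hCm, Matrix.sum_apply, Matrix.submatrix_apply]
          rw [h2, det_updateRow_finset_sum]
          refine (Finset.sum_congr rfl fun j _ => ?_).symm
          rw [show (fun t => c j • ((fun t' => A j.succ ((σ.1.orderIsoOfFin σ.2 r : Fin k)) t') t))
              = c j • (fun t' => A j.succ ((σ.1.orderIsoOfFin σ.2 r : Fin k)) t') from rfl,
            Matrix.det_updateRow_smul]
      _ = 0 := by
          apply sum_det_updateRow_eq_zero _ _ x v i0 hx0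
          · funext r
            have h5 := congrFun heig ((σ.1.orderIsoOfFin σ.2 r : Fin k))
            simpa [Matrix.mulVec, dotProduct, Matrix.submatrix_apply] using h5
          · funext r
            have h5 := congrFun hv ((σ.1.orderIsoOfFin σ.2 r : Fin k))
            simp only [Matrix.mulVec, dotProduct, Matrix.submatrix_apply, id_eq] at h5 ⊢
            exact h5.symm
  -- contradiction with the rank hypothesis
  set J := (Matrix.of fun (σ : {s : Finset (Fin k) // s.card = l}) (j : Fin m) =>
      MvPolynomial.eval lam (MvPolynomial.pderiv j (secular A σ.1 σ.2))) with hJdef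
  have hJc2 : J.mulVec c = 0 := by
    funext σ
    show (∑ j, J σ j * c j) = 0
    exact hJc σ
  have hcker : c ∈ LinearMap.ker J.mulVecLin := by
    rw [LinearMap.mem_ker, Matrix.mulVecLin_apply]
    exact hJc2
  have hpos : 0 < Module.finrank ℂ (LinearMap.ker J.mulVecLin) := by
    apply Module.finrank_pos_iff.mpr
    exact nontrivial_of_ne ⟨c, hcker⟩ 0
      (fun h => hc0 (by simpa using congrArg Subtype.val h))
  have h1 := LinearMap.finrank_range_add_finrank_ker J.mulVecLin
  rw [Module.finrank_fin_fun] at h1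
  have h2 : Module.finrank ℂ (LinearMap.range J.mulVecLin) = m := hrank
  omega
end

section
/- Let m ≥ 1, A₀, A₁, …, A_m ∈ ℂ^{k×ℓ}, and E₀, …, E_m ∈ ℂ^{k×ℓ} error matrices. Let λ* ∈ ℂ^m, let x* ∈ ℂ^ℓ with ‖x*‖ = 1, and let y* ∈ ℂ^k with ‖y*‖ = 1. Let ε ≥ 0 and define the perturbations ΔA₀ = −ε ‖E₀‖ y* (x*)^H and ΔA_i = −ε sign(λ*_i) ‖E_i‖ y* (x*)^H for i = 1, …, m. Then ‖ΔA_i‖ ≤ ε ‖E_i‖ for all i = 0, …, m, and for every vector y ∈ ℂ^k one has y^H (ΔA₀ + Σ_{i=1}^m λ*_i ΔA_i) x* = −ε γ(λ*) (y^H y*), where γ(λ*) = ‖E₀‖ + Σ_{i=1}^m |λ*_i| ‖E_i‖. -/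
open scoped ComplexOrder
open Matrix

/-- The sign of a complex number: `sign z = conj z / |z|` for `z ≠ 0`, `sign 0 = 0`. -/
noncomputable def csign (z : ℂ) : ℂ :=
  if z = 0 then 0 else (starRingEnd ℂ) z / ((‖z‖ : ℝ) : ℂ)


section Helpers

lemma opNorm2_smul' {k l : ℕ} (c : ℂ) (M : Matrix (Fin k) (Fin l) ℂ) :
    opNorm2 (c • M) = ‖c‖ * opNorm2 M := by
  unfold opNorm2
  rw [_root_.map_smul, _root_.map_smul]
  exact norm_smul c (LinearMap.toContinuousLinearMap (Matrix.toEuclideanLin M))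

lemma opNorm2_neg' {k l : ℕ} (M : Matrix (Fin k) (Fin l) ℂ) :
    opNorm2 (-M) = opNorm2 M := by
  unfold opNorm2
  rw [map_neg, map_neg, norm_neg]

lemma vecMulVec_mulVec' {k l : ℕ} (a : Fin k → ℂ) (b : Fin l → ℂ) (v : Fin l → ℂ) :
    (Matrix.vecMulVec a b).mulVec v = (b ⬝ᵥ v) • a := by
  ext j
  simp [Matrix.mulVec, Matrix.vecMulVec_apply, dotProduct, Finset.mul_sum,
    mul_assoc, mul_comm, mul_left_comm]

lemma star_dot_self' {n : ℕ} (v : Fin n → ℂ) : star v ⬝ᵥ v = ((enorm2 v : ℝ) : ℂ) ^ 2 := by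
  have h := inner_self_eq_norm_sq_to_K (𝕜 := ℂ) ((WithLp.equiv 2 (Fin n → ℂ)).symm v)
  rw [dotProduct_comm]
  exact (EuclideanSpace.inner_eq_star_dotProduct
    (x := (WithLp.toLp 2 v : EuclideanSpace ℂ (Fin n))) _).symm.trans h

lemma enorm_smul' {n : ℕ} (c : ℂ) (v : Fin n → ℂ) : enorm2 (c • v) = ‖c‖ * enorm2 v := by
  unfold enorm2
  rw [show (WithLp.equiv 2 (Fin n → ℂ)).symm (c • v) = c • (WithLp.equiv 2 (Fin n → ℂ)).symm v from rfl]
  exact norm_smul c ((WithLp.equiv 2 (Fin n → ℂ)).symm v)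

lemma opNorm2_le_bound' {k l : ℕ} (M : Matrix (Fin k) (Fin l) ℂ) (C : ℝ) (hC : 0 ≤ C)
    (h : ∀ v, enorm2 (M.mulVec v) ≤ C * enorm2 v) : opNorm2 M ≤ C := by
  apply ContinuousLinearMap.opNorm_le_bound _ hC
  intro w
  have := h ((WithLp.equiv 2 (Fin l → ℂ)) w)
  simpa [enorm2, Matrix.toEuclideanLin_apply] using this

lemma abs_star_dot' {l : ℕ} (x v : Fin l → ℂ) : ‖star x ⬝ᵥ v‖ ≤ enorm2 x * enorm2 v := by
  have h : star x ⬝ᵥ v = inner ℂ ((WithLp.equiv 2 (Fin l → ℂ)).symm x)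
      ((WithLp.equiv 2 (Fin l → ℂ)).symm v) := by
    rw [PiLp.inner_apply]
    simp [dotProduct, RCLike.inner_apply, mul_comm]
  rw [h]
  exact norm_inner_le_norm _ _

lemma opNorm2_vecMulVec_le' {k l : ℕ} (ys : Fin k → ℂ) (x : Fin l → ℂ) :
    opNorm2 (Matrix.vecMulVec ys (star x)) ≤ enorm2 ys * enorm2 x := by
  apply opNorm2_le_bound' _ _ (mul_nonneg (norm_nonneg _) (norm_nonneg _))
  intro v
  rw [vecMulVec_mulVec', enorm_smul']
  calc ‖star x ⬝ᵥ v‖ * enorm2 ys ≤ (enorm2 x * enorm2 v) * enorm2 ys :=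
        mul_le_mul_of_nonneg_right (abs_star_dot' x v) (norm_nonneg _)
    _ = enorm2 ys * enorm2 x * enorm2 v := by ring

lemma lam_mul_csign' (z : ℂ) : z * csign z = ((‖z‖ : ℝ) : ℂ) := by
  unfold csign
  by_cases hz : z = 0
  · simp [hz]
  · rw [if_neg hz, ← mul_div_assoc]
    rw [Complex.mul_conj]
    have hn : ((‖z‖ : ℝ) : ℂ) ≠ 0 := by exact_mod_cast norm_ne_zero_iff.mpr hz
    rw [div_eq_iff hn, ← Complex.sq_norm]
    push_cast
    ring

lemma norm_csign_le (z : ℂ) : ‖csign z‖ ≤ 1 := by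
  unfold csign
  by_cases hz : z = 0
  · simp [hz]
  · have habs : ‖z‖ ≠ 0 := norm_ne_zero_iff.mpr hz
    rw [if_neg hz, norm_div]
    rw [Complex.norm_conj, Complex.norm_real, Real.norm_eq_abs, abs_of_nonneg (norm_nonneg z)]
    rw [div_le_one (lt_of_le_of_ne (norm_nonneg z) (Ne.symm habs))]

end Helpers

/-- the worst-case perturbations attaining the eigenvalue condition
number are feasible and produce the claimed first-order effect. -/
theorem worst_case_perturbations {m k l : ℕ} (hm : 1 ≤ m)
    (A E : Fin (m + 1) → Matrix (Fin k) (Fin l) ℂ)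
    (lam : Fin m → ℂ) (x : Fin l → ℂ) (hx : enorm2 x = 1)
    (ys : Fin k → ℂ) (hy : enorm2 ys = 1)
    (ε : ℝ) (hε : 0 ≤ ε)
    (ΔA : Fin (m + 1) → Matrix (Fin k) (Fin l) ℂ)
    (hΔA0 : ΔA 0 = -(((ε * opNorm2 (E 0) : ℝ) : ℂ) • Matrix.vecMulVec ys (star x)))
    (hΔAi : ∀ i : Fin m, ΔA i.succ
      = -(((ε : ℂ) * csign (lam i) * ((opNorm2 (E i.succ) : ℝ) : ℂ)) •
          Matrix.vecMulVec ys (star x))) :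
    (∀ i, opNorm2 (ΔA i) ≤ ε * opNorm2 (E i)) ∧
    (∀ y : Fin k → ℂ,
      star y ⬝ᵥ (ΔA 0 + ∑ i : Fin m, lam i • ΔA i.succ).mulVec x
        = -(((ε * gammaVal E lam : ℝ) : ℂ) * (star y ⬝ᵥ ys))) := by
  set V := Matrix.vecMulVec ys (star x) with hV
  have hVle : opNorm2 V ≤ 1 := by
    have := opNorm2_vecMulVec_le' ys x
    rwa [hx, hy, one_mul] at this
  have hVnn : 0 ≤ opNorm2 V := norm_nonneg _
  constructor
  · intro i
    induction i using Fin.cases with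
    | zero =>
        rw [hΔA0, opNorm2_neg', opNorm2_smul']
        have h0 : (0:ℝ) ≤ opNorm2 (E 0) := norm_nonneg _
        have hc : ‖((ε * opNorm2 (E 0) : ℝ) : ℂ)‖ = ε * opNorm2 (E 0) := by
          rw [Complex.norm_real, Real.norm_eq_abs, abs_of_nonneg (mul_nonneg hε h0)]
        rw [hc]
        calc ε * opNorm2 (E 0) * opNorm2 V ≤ ε * opNorm2 (E 0) * 1 :=
              mul_le_mul_of_nonneg_left hVle (mul_nonneg hε (norm_nonneg _))
          _ = ε * opNorm2 (E 0) := mul_one _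
    | succ i =>
        rw [hΔAi i, opNorm2_neg', opNorm2_smul']
        have hc : ‖(ε : ℂ) * csign (lam i) * ((opNorm2 (E i.succ) : ℝ) : ℂ)‖
            ≤ ε * opNorm2 (E i.succ) := by
          have hEi : (0:ℝ) ≤ opNorm2 (E i.succ) := norm_nonneg _
          rw [norm_mul, norm_mul, Complex.norm_real, Complex.norm_real,
            Real.norm_eq_abs, Real.norm_eq_abs, abs_of_nonneg hε, abs_of_nonneg hEi]
          calc ε * ‖csign (lam i)‖ * opNorm2 (E i.succ)
              ≤ ε * 1 * opNorm2 (E i.succ) :=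
                mul_le_mul_of_nonneg_right
                  (mul_le_mul_of_nonneg_left (norm_csign_le _) hε) (norm_nonneg _)
            _ = ε * opNorm2 (E i.succ) := by ring
        calc ‖(ε : ℂ) * csign (lam i) * ((opNorm2 (E i.succ) : ℝ) : ℂ)‖ * opNorm2 V
            ≤ ‖(ε : ℂ) * csign (lam i) * ((opNorm2 (E i.succ) : ℝ) : ℂ)‖ * 1 :=
              mul_le_mul_of_nonneg_left hVle (norm_nonneg _)
          _ = ‖(ε : ℂ) * csign (lam i) * ((opNorm2 (E i.succ) : ℝ) : ℂ)‖ := mul_one _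
          _ ≤ ε * opNorm2 (E i.succ) := hc
  · intro y
    have hxx : star x ⬝ᵥ x = 1 := by
      rw [star_dot_self', hx]
      norm_num
    have key : ΔA 0 + ∑ i : Fin m, lam i • ΔA i.succ
        = -(((ε * gammaVal E lam : ℝ) : ℂ) • V) := by
      rw [hΔA0]
      have hterm : ∀ i : Fin m, lam i • ΔA i.succ
          = -(((ε : ℂ) * ((‖lam i‖ : ℝ) : ℂ)
              * ((opNorm2 (E i.succ) : ℝ) : ℂ)) • V) := by
        intro i
        rw [hΔAi i, smul_neg, smul_smul]
        congr 1
        rw [← lam_mul_csign' (lam i)]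
        ring_nf
      simp only [hterm]
      rw [Finset.sum_neg_distrib, ← neg_add]
      congr 1
      rw [← Finset.sum_smul, ← add_smul]
      congr 1
      unfold gammaVal
      push_cast
      rw [mul_add, Finset.mul_sum]
      congr 1
      exact Finset.sum_congr rfl fun i _ => by ring
    rw [key, Matrix.neg_mulVec, dotProduct_neg, Matrix.smul_mulVec,
      vecMulVec_mulVec', hxx, one_smul, dotProduct_smul]
    rw [smul_eq_mul]
end
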